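/- arXiv:2002.02869 — 5 statements merged into one kernel-verified Lean document; each statement's English description precedes it below -/
import Mathlib

section
/- The determinant of the 3×3 matrix R = [[1, F, -F], [-F, 1-F², F+F²], [F+F², -F+F²+F³, 1-2F²-F³]] equals 1 for every real number F. -/
theorem revde_det (F : ℝ) :
    (!![1, F, -F;
        -F, 1 - F ^ 2, F + F ^ 2;
        F + F ^ 2, -F + F ^ 2 + F ^ 3, 1 - 2 * F ^ 2 - F ^ 3] :
      Matrix (Fin 3) (Fin 3) ℝ).det = 1 := by
  simp [Matrix.det_fin_three]
  ring
end

section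
/- For any vectors x₁, x₂, x₃ ∈ ℝᴰ and real F, the vectors defined recursively by y₁ = x₁ + F(x₂ - x₃), y₂ = x₂ + F(x₃ - y₁), y₃ = x₃ + F(y₁ - y₂) satisfy, componentwise, (y₁, y₂, y₃)ᵀ = R (x₁, x₂, x₃)ᵀ where R = [[1, F, -F], [-F, 1-F², F+F²], [F+F², -F+F²+F³, 1-2F²-F³]]. -/
theorem revde_is_linear (D : ℕ) (F : ℝ) (x₁ x₂ x₃ y₁ y₂ y₃ : Fin D → ℝ)
    (h₁ : y₁ = x₁ + F • (x₂ - x₃))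
    (h₂ : y₂ = x₂ + F • (x₃ - y₁))
    (h₃ : y₃ = x₃ + F • (y₁ - y₂)) :
    ∀ d : Fin D,
      ![y₁ d, y₂ d, y₃ d] =
        Matrix.mulVec
          (!![1, F, -F;
              -F, 1 - F ^ 2, F + F ^ 2;
              F + F ^ 2, -F + F ^ 2 + F ^ 3, 1 - 2 * F ^ 2 - F ^ 3] :
            Matrix (Fin 3) (Fin 3) ℝ)
          ![x₁ d, x₂ d, x₃ d] := by
  intro d
  subst h₁ h₂ h₃
  funext i
  fin_cases i <;>
    simp [Matrix.mulVec, dotProduct, Fin.sum_univ_three] <;> ring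
end

section
/- The characteristic polynomial of R = [[1, F, -F], [-F, 1-F², F+F²], [F+F², -F+F²+F³, 1-2F²-F³]] is λ³ - t·λ² + t·λ - 1, where t = 3 - 3F² - F³; in particular it factors as (λ - 1)(λ² - (t - 1)λ + 1). -/
open Polynomial in
theorem revde_charpoly (F : ℝ) :
    (!![1, F, -F;
        -F, 1 - F ^ 2, F + F ^ 2;
        F + F ^ 2, -F + F ^ 2 + F ^ 3, 1 - 2 * F ^ 2 - F ^ 3] :
      Matrix (Fin 3) (Fin 3) ℝ).charpoly =
      X ^ 3 - C (3 - 3 * F ^ 2 - F ^ 3) * X ^ 2 + C (3 - 3 * F ^ 2 - F ^ 3) * X - 1 ∧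
    (!![1, F, -F;
        -F, 1 - F ^ 2, F + F ^ 2;
        F + F ^ 2, -F + F ^ 2 + F ^ 3, 1 - 2 * F ^ 2 - F ^ 3] :
      Matrix (Fin 3) (Fin 3) ℝ).charpoly =
      (X - 1) * (X ^ 2 - C ((3 - 3 * F ^ 2 - F ^ 3) - 1) * X + 1) := by
  have h : (!![1, F, -F;
        -F, 1 - F ^ 2, F + F ^ 2;
        F + F ^ 2, -F + F ^ 2 + F ^ 3, 1 - 2 * F ^ 2 - F ^ 3] :
      Matrix (Fin 3) (Fin 3) ℝ).charpoly =
      X ^ 3 - C (3 - 3 * F ^ 2 - F ^ 3) * X ^ 2 + C (3 - 3 * F ^ 2 - F ^ 3) * X - 1 := by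
    rw [Matrix.charpoly, Matrix.det_fin_three]
    simp [Matrix.charmatrix_apply, Matrix.one_apply, map_ofNat]
    ring
  refine ⟨h, h.trans ?_⟩
  simp [map_ofNat]
  ring
end

section
/- For every real F, the number 1 is an eigenvalue of the RevDE matrix R = [[1, F, -F], [-F, 1-F², F+F²], [F+F², -F+F²+F³, 1-2F²-F³]], and the product of the other two (complex) eigenvalues equals 1. -/
open Polynomial in
theorem revde_eigenvalue_one_and_product (F : ℝ) :
    (1 : ℂ) ∈ spectrum ℂ
        (!![1, (F : ℂ), -F;
            -F, 1 - F ^ 2, F + F ^ 2;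
            F + F ^ 2, -F + F ^ 2 + F ^ 3, 1 - 2 * F ^ 2 - F ^ 3] :
          Matrix (Fin 3) (Fin 3) ℂ) ∧
    ∃ a b : ℂ,
      (!![1, (F : ℂ), -F;
          -F, 1 - F ^ 2, F + F ^ 2;
          F + F ^ 2, -F + F ^ 2 + F ^ 3, 1 - 2 * F ^ 2 - F ^ 3] :
        Matrix (Fin 3) (Fin 3) ℂ).charpoly = (X - 1) * (X - C a) * (X - C b) ∧
      a * b = 1 := by
  set M : Matrix (Fin 3) (Fin 3) ℂ :=
    !![1, (F : ℂ), -F;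
       -F, 1 - F ^ 2, F + F ^ 2;
       F + F ^ 2, -F + F ^ 2 + F ^ 3, 1 - 2 * F ^ 2 - F ^ 3] with hM
  set t : ℂ := 2 - 3 * (F : ℂ) ^ 2 - (F : ℂ) ^ 3 with ht
  obtain ⟨s, hs⟩ := IsAlgClosed.exists_pow_nat_eq (t ^ 2 - 4) (n := 2) (by norm_num)
  refine ⟨?_, (t + s) / 2, (t - s) / 2, ?_, by linear_combination (-1/4 : ℂ) * hs⟩
  · rw [spectrum.mem_iff]
    intro h
    rw [Matrix.isUnit_iff_isUnit_det] at h
    have : ((algebraMap ℂ (Matrix (Fin 3) (Fin 3) ℂ)) 1 - M).det = 0 := by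
      rw [Matrix.det_fin_three]
      simp [hM, Matrix.algebraMap_matrix_apply]
      ring
    rw [this] at h
    exact h.ne_zero rfl
  · have h1 : M.charpoly = (X - 1) * (X ^ 2 - C t * X + 1) := by
      rw [Matrix.charpoly, Matrix.det_fin_three, ht]
      simp [hM, Matrix.charmatrix_apply_eq, Matrix.charmatrix_apply_ne, map_ofNat]
      ring
    rw [h1, mul_assoc]
    congr 1
    have hsum : (t + s) / 2 + (t - s) / 2 = t := by ring
    have hprod : (t + s) / 2 * ((t - s) / 2) = 1 := by
      linear_combination (-1/4 : ℂ) * hs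
    rw [show (X - C ((t + s) / 2)) * (X - C ((t - s) / 2)) =
        X ^ 2 - C ((t + s) / 2 + (t - s) / 2) * X + C ((t + s) / 2 * ((t - s) / 2)) by
      simp only [map_add, map_mul]; ring]
    rw [hsum, hprod, map_one]
end

section
/- For every F with 0 < F < 1, the two eigenvalues of the RevDE matrix R other than 1 are non-real complex conjugates, each of absolute value exactly 1. -/
open Polynomial in
theorem revde_unit_modulus_eigenvalues (F : ℝ) (hF0 : 0 < F) (hF1 : F < 1) :
    ∃ a : ℂ, a.im ≠ 0 ∧ ‖a‖ = 1 ∧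
      (!![1, (F : ℂ), -F;
          -F, 1 - F ^ 2, F + F ^ 2;
          F + F ^ 2, -F + F ^ 2 + F ^ 3, 1 - 2 * F ^ 2 - F ^ 3] :
        Matrix (Fin 3) (Fin 3) ℂ).charpoly =
        (X - 1) * (X - C a) * (X - C (starRingEnd ℂ a)) := by
  set t : ℝ := 1 - (3 * F ^ 2 + F ^ 3) / 2 with ht
  have hu0 : 0 < 3 * F ^ 2 + F ^ 3 := by positivity
  have hu4 : 3 * F ^ 2 + F ^ 3 < 4 := by
    nlinarith [mul_pos (show (0:ℝ) < 1 - F by linarith) (show (0:ℝ) < (F + 2) ^ 2 by positivity)]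
  have ht2 : t ^ 2 < 1 := by
    rw [ht]
    nlinarith [mul_pos hu0 (show (0:ℝ) < 4 - (3 * F ^ 2 + F ^ 3) by linarith)]
  set s : ℝ := Real.sqrt (1 - t ^ 2) with hs
  have hspos : 0 < s := Real.sqrt_pos.mpr (by linarith)
  have hs2 : s ^ 2 = 1 - t ^ 2 := Real.sq_sqrt (by linarith)
  refine ⟨⟨t, s⟩, ?_, ?_, ?_⟩
  · exact ne_of_gt hspos
  · rw [Complex.norm_def, Complex.normSq_mk]
    have : t * t + s * s = 1 := by nlinarith
    rw [this, Real.sqrt_one]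
  · have h1 : (⟨t, s⟩ : ℂ) + (starRingEnd ℂ) ⟨t, s⟩ = 2 - 3 * (F : ℂ) ^ 2 - (F : ℂ) ^ 3 := by
      apply Complex.ext <;>
        simp [Complex.add_re, Complex.add_im, ht, ← Complex.ofReal_pow] <;> push_cast <;> ring
    have h2 : (⟨t, s⟩ : ℂ) * (starRingEnd ℂ) ⟨t, s⟩ = 1 := by
      apply Complex.ext <;> simp [Complex.mul_re, Complex.mul_im] <;> nlinarith
    rw [Matrix.charpoly, Matrix.det_fin_three]
    simp [Matrix.charmatrix_apply_eq, Matrix.charmatrix_apply_ne, map_ofNat, map_sub,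
      map_add, map_mul, map_pow, map_one]
    have c1 := congrArg C h1
    have c2 := congrArg C h2
    simp only [map_add, map_mul, map_sub, map_pow, map_one, map_ofNat] at c1 c2
    linear_combination (1 - X) * c2 + (X ^ 2 - X) * c1
end
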